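/- Let j ≥ 2 and t ≥ 1 be natural numbers with Nat.Coprime j t, and let M := orderOf ((j : ZMod (t*(j−1)))). Then M ≤ t, and for every natural number u ≥ 1, t divides ∑_{i=0}^{u−1} j^i (i.e. t ∣ (Finset.range u).sum (fun i => j^i)) if and only if M ∣ u. -/

import Mathlib

/-- Arithmetic claims from the proofs of Theorem 1.3/1.4 and Proposition 9.1 of the
paper: for j ≥ 2 coprime to t, the order M of j modulo t(j−1) satisfies M ≤ t, and
t ∣ 1 + j + ⋯ + j^{u−1} iff M ∣ u. -/
theorem stmt_17 (j t : ℕ) (hj : 2 ≤ j) (ht : 1 ≤ t) (hco : Nat.Coprime j t)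
    (M : ℕ) (hM : M = orderOf ((j : ZMod (t * (j - 1))))) :
    M ≤ t ∧ ∀ u : ℕ, 1 ≤ u →
      ((t ∣ (Finset.range u).sum fun i => j ^ i) ↔ M ∣ u) := by
  set N := t * (j - 1) with hNdef
  have hj1 : 1 ≤ j - 1 := by omega
  have hN : 0 < N := Nat.mul_pos ht hj1
  haveI : NeZero N := ⟨hN.ne'⟩
  set x : ZMod N := (j : ZMod N) with hx
  -- j is coprime to N
  have hcoN : Nat.Coprime j N := by
    refine Nat.Coprime.mul_right ?_ ?_
    · exact hco
    · exact (Nat.coprime_self_sub_right (by omega)).mpr (Nat.coprime_one_right _)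
  have hxu : IsUnit x := by
    rw [hx]
    exact (ZMod.isUnit_iff_coprime j N).mpr hcoN
  -- key equivalence: x ^ u = 1 ↔ (N : ℤ) ∣ j ^ u - 1
  have key : ∀ u : ℕ, x ^ u = 1 ↔ (N : ℤ) ∣ (j : ℤ) ^ u - 1 := by
    intro u
    rw [← ZMod.intCast_zmod_eq_zero_iff_dvd]
    push_cast
    rw [sub_eq_zero]
  constructor
  · -- M ≤ t : powers of x lie in the image of k ↦ 1 + k*(j-1), k < t
    have hfin : ∀ i : ℕ, x ^ i ∈ (Finset.range t).image
        (fun k : ℕ => ((1 + k * (j - 1) : ℕ) : ZMod N)) := by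
      intro i
      rcases eq_or_lt_of_le (show 1 ≤ N from hN) with hN1 | hN1
      · -- N = 1 : everything is equal
        simp only [Finset.mem_image]
        refine ⟨0, Finset.mem_range.mpr ht, ?_⟩
        haveI : Subsingleton (ZMod N) := by
          rw [← hN1]; infer_instance
        exact Subsingleton.elim _ _
      · set v := (x ^ i).val with hv
        clear_value v
        have hvlt : v < N := by rw [hv]; exact ZMod.val_lt _
        have hveq : x ^ i = (v : ZMod N) := by
          rw [hv, ZMod.natCast_val, ZMod.cast_id]
        -- v ≡ 1 [MOD j-1]
        have hxv : x ^ i = ((j ^ i : ℕ) : ZMod N) := by push_cast [hx]; ring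
        have hmodN : v = j ^ i % N := by
          rw [hv, hxv, ZMod.val_natCast]
        have hdvdN : (j - 1 : ℕ) ∣ N := Dvd.intro_left t rfl
        have hj1mod : j ≡ 1 [MOD j - 1] :=
          ((Nat.modEq_iff_dvd' (by omega)).mpr dvd_rfl).symm
        have hmod : v ≡ 1 [MOD j - 1] := by
          calc v ≡ j ^ i [MOD j - 1] := by
                rw [hmodN]
                exact (Nat.mod_modEq (j ^ i) N).of_dvd hdvdN
            _ ≡ 1 ^ i [MOD j - 1] := Nat.ModEq.pow i hj1mod
            _ = 1 := one_pow i
        -- v ≥ 1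
        have hv1 : 1 ≤ v := by
          rcases Nat.lt_or_ge 1 (j - 1) with h2 | h2
          · -- j - 1 > 1 : v % (j-1) = 1
            have := hmod
            unfold Nat.ModEq at this
            rw [Nat.mod_eq_of_lt h2] at this
            rcases Nat.eq_zero_or_pos v with h0 | h0
            · rw [h0, Nat.zero_mod] at this; omega
            · exact h0
          · -- j - 1 = 1, so v ≠ 0 since x^i is a unit and N > 1
            by_contra h
            have hv0 : v = 0 := by omega
            have hx0 : x ^ i = 0 := by rw [hveq, hv0]; simp
            haveI : Nontrivial (ZMod N) := by
              apply ZMod.nontrivial_iff.mpr; omega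
            exact (hxu.pow i).ne_zero hx0
        have hdvd : (j - 1 : ℕ) ∣ v - 1 := (Nat.modEq_iff_dvd' hv1).mp hmod.symm
        obtain ⟨k, hk⟩ := hdvd
        have hklt : k < t := by
          by_contra h
          push_neg at h
          have h2 : t * (j - 1) ≤ (j - 1) * k := by
            calc t * (j - 1) = (j - 1) * t := Nat.mul_comm _ _
              _ ≤ (j - 1) * k := Nat.mul_le_mul_left _ h
          have h3 : v - 1 < t * (j - 1) :=
            lt_of_le_of_lt (Nat.sub_le v 1) (by rw [← hNdef]; exact hvlt)
          rw [← hk] at h2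
          exact absurd h2 (Nat.not_le.mpr h3)
        simp only [Finset.mem_image]
        refine ⟨k, Finset.mem_range.mpr hklt, ?_⟩
        have : 1 + k * (j - 1) = v := by rw [Nat.mul_comm, ← hk]; omega
        rw [this, ← hveq]
    -- powers x^0, ..., x^(M-1) are distinct
    have hMord : M = orderOf x := hM
    have hinj : Set.InjOn (fun i => x ^ i) (Set.Iio (orderOf x)) :=
      pow_injOn_Iio_orderOf
    have hcard : ((Finset.range M).image fun i => x ^ i).card = M := by
      rw [Finset.card_image_of_injOn, Finset.card_range]
      intro a ha b hb hab
      exact hinj (by simpa [hMord] using Finset.mem_range.mp ha)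
        (by simpa [hMord] using Finset.mem_range.mp hb) hab
    calc M = ((Finset.range M).image fun i => x ^ i).card := hcard.symm
      _ ≤ ((Finset.range t).image
          (fun k : ℕ => ((1 + k * (j - 1) : ℕ) : ZMod N))).card := by
          apply Finset.card_le_card
          intro y hy
          simp only [Finset.mem_image] at hy
          obtain ⟨i, _, rfl⟩ := hy
          exact hfin i
      _ ≤ t := by
          apply le_trans (Finset.card_image_le)
          simp
  · intro u hu
    -- t ∣ ∑ ↔ N ∣ j^u - 1 (over ℤ) ↔ x^u = 1 ↔ M ∣ u
    have hjz : (1 : ℤ) ≤ (j : ℤ) - 1 := by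
      have : (2 : ℤ) ≤ (j : ℤ) := by exact_mod_cast hj
      linarith
    have hgeom : ((Finset.range u).sum fun i => (j : ℤ) ^ i) * ((j : ℤ) - 1)
        = (j : ℤ) ^ u - 1 := geom_sum_mul (j : ℤ) u
    have step1 : (t ∣ (Finset.range u).sum fun i => j ^ i) ↔
        ((t : ℤ) ∣ (Finset.range u).sum fun i => (j : ℤ) ^ i) := by
      constructor <;> intro h <;> exact_mod_cast h
    have step2 : ((t : ℤ) ∣ (Finset.range u).sum fun i => (j : ℤ) ^ i) ↔
        ((N : ℤ) ∣ (j : ℤ) ^ u - 1) := by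
      rw [← hgeom]
      have hNZ : (N : ℤ) = (t : ℤ) * ((j : ℤ) - 1) := by
        rw [hNdef]
        push_cast [Nat.cast_sub (by omega : 1 ≤ j)]
        ring
      rw [hNZ]
      exact (mul_dvd_mul_iff_right (by linarith : ((j : ℤ) - 1) ≠ 0)).symm
    rw [step1, step2, ← key u, hM]
    exact (orderOf_dvd_iff_pow_eq_one).symm
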